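/- For all integers d, r ≥ 1 and 0 ≤ ℓ ≤ d, the following identity of formal power series holds: (1−x)^{d+1} · ∑_{t≥0} (rt)^ℓ (rt+1)^{d−ℓ} x^t = ∑_{(π,ε) ∈ ℤ_r ≀ S_d} x^{des_ℓ(π,ε)}. In other words, the r-colored ℓ-Eulerian polynomial A_{d,ℓ}^{(r)} equals the generating polynomial of the ℓ-descent statistic over the wreath product ℤ_r ≀ S_d. (Proposition 5.6) -/

import Mathlib

open Polynomial PowerSeries

/-- The value `π_i ∈ {1, …, d}` of the underlying permutation of an element of the wreath
product `ℤ_r ≀ S_d` at position `i ∈ {1, …, d}`, with the convention `π_0 = 0`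
(and value `0` for out-of-range indices). -/
def wreathVal (d : ℕ) (π : Equiv.Perm (Fin d)) (i : ℕ) : ℕ :=
  if h : i - 1 < d ∧ 1 ≤ i then ((π ⟨i - 1, h.1⟩ : Fin d) : ℕ) + 1 else 0

/-- The color `c_i ∈ {0, …, r-1}` of an element of the wreath product `ℤ_r ≀ S_d` at
position `i ∈ {1, …, d}`, with the convention `c_0 = 0`. -/
def wreathCol (d r : ℕ) (ε : Fin d → Fin r) (i : ℕ) : ℕ :=
  if h : i - 1 < d ∧ 1 ≤ i then ((ε ⟨i - 1, h.1⟩ : Fin r) : ℕ) else 0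

/-- The descent set `Des(π, ε) ⊆ {0, 1, …, d-1}` of `(π, ε) ∈ ℤ_r ≀ S_d`:
`j ∈ Des(π, ε)` iff `π_j^{c_j} > π_{j+1}^{c_{j+1}}` in the order where
`i^{c} < j^{c'}` iff `c > c'`, or `c = c'` and `i < j`  (conventions `π_0 = 0`, `c_0 = 0`). -/
def wreathDes (d r : ℕ) (π : Equiv.Perm (Fin d)) (ε : Fin d → Fin r) : Finset ℕ :=
  (Finset.range d).filter fun j =>
    wreathCol d r ε j < wreathCol d r ε (j + 1) ∨
      (wreathCol d r ε j = wreathCol d r ε (j + 1) ∧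
        wreathVal d π (j + 1) < wreathVal d π j)

/-- The `ℓ`-descent statistic `des_ℓ(π, ε) = |Des_ℓ(π, ε)|`, where
`Des_ℓ(π, ε) = Des(π, ε) ∪ {0}` if `π_1 ∈ {1, …, ℓ}` and `Des_ℓ(π, ε) = Des(π, ε)`
otherwise. -/
def wreathDesL (d r ℓ : ℕ) (π : Equiv.Perm (Fin d)) (ε : Fin d → Fin r) : ℕ :=
  (wreathDes d r π ε ∪
      (if 1 ≤ wreathVal d π 1 ∧ wreathVal d π 1 ≤ ℓ then {0} else ∅)).card

namespace CEAux
open Finset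

abbrev Letter (t r : ℕ) := Option (Fin t × Fin r)

variable {d r t ℓ : ℕ}

def lval : Letter t r → ℕ
  | none => 0
  | some (a, _) => (a : ℕ) + 1

def lcol : Letter t r → ℕ
  | none => 0
  | some (_, c) => (c : ℕ)

lemma lval_le (x : Letter t r) : lval x ≤ t := by
  cases x with
  | none => simp [lval]
  | some a => exact a.1.isLt

lemma lcol_lt (hr : 0 < r) (x : Letter t r) : lcol x < r := by
  cases x with
  | none => exact hr
  | some a => exact a.2.isLt

lemma lval_eq_zero_iff (x : Letter t r) : lval x = 0 ↔ x = none := by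
  cases x <;> simp [lval]

lemma letter_ext {x y : Letter t r} (hv : lval x = lval y) (hc : lcol x = lcol y) : x = y := by
  cases x with
  | none =>
    cases y with
    | none => rfl
    | some b => simp [lval] at hv
  | some a =>
    cases y with
    | none => simp [lval] at hv
    | some b =>
      simp only [lval, lcol, Nat.add_right_cancel_iff] at hv hc
      obtain ⟨a1, a2⟩ := a; obtain ⟨b1, b2⟩ := b
      simp only [Option.some.injEq, Prod.mk.injEq]
      exact ⟨Fin.ext hv, Fin.ext hc⟩

def key (d r t : ℕ) (w : Fin d → Letter t r) (i : Fin d) : ℕ ×ₗ (ℕ ×ₗ ℕ) :=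
  toLex (lval (w i), toLex (r - 1 - lcol (w i), (i : ℕ)))

lemma key_lt_iff (hr : 0 < r) (w : Fin d → Letter t r) (i j : Fin d) :
    key d r t w i < key d r t w j ↔
      lval (w i) < lval (w j) ∨ (lval (w i) = lval (w j) ∧
        (lcol (w j) < lcol (w i) ∨ (lcol (w i) = lcol (w j) ∧ (i : ℕ) < (j : ℕ)))) := by
  have hi := lcol_lt hr (w i)
  have hj := lcol_lt hr (w j)
  unfold key
  rw [Prod.Lex.lt_iff, Prod.Lex.lt_iff]
  simp only [ofLex_toLex]
  omega

lemma key_inj (w : Fin d → Letter t r) : Function.Injective (key d r t w) := by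
  intro i j h
  have h2 := congrArg (fun x : ℕ ×ₗ (ℕ ×ₗ ℕ) => (ofLex (ofLex x).2).2) h
  exact Fin.ext h2





def Lam (d t : ℕ) (f : Fin d → Fin (t + 1)) (i : ℕ) : ℕ :=
  if h : i - 1 < d ∧ 1 ≤ i then (f ⟨i - 1, h.1⟩ : ℕ) else 0

lemma Lam_zero (f : Fin d → Fin (t + 1)) : Lam d t f 0 = 0 := by simp [Lam]

lemma Lam_succ (f : Fin d → Fin (t + 1)) {m : ℕ} (hm : m < d) :
    Lam d t f (m + 1) = (f ⟨m, hm⟩ : ℕ) := by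
  simp [Lam, hm]

lemma Lam_le (f : Fin d → Fin (t + 1)) (i : ℕ) : Lam d t f i ≤ t := by
  unfold Lam
  split
  · exact Nat.lt_succ_iff.mp (Fin.isLt _)
  · exact Nat.zero_le t

def compat (d t : ℕ) (D : Finset ℕ) (f : Fin d → Fin (t + 1)) : Prop :=
  ∀ j, j < d → (Lam d t f j ≤ Lam d t f (j + 1) ∧ (j ∈ D → Lam d t f j < Lam d t f (j + 1)))

instance (D : Finset ℕ) : DecidablePred (compat d t D) := fun f => by
  unfold compat; infer_instance

/-- chain lemma for strict mono on a Fin-indexed ℕ sequence -/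
lemma strictMono_fin_chain {m : ℕ} {g : Fin m → ℕ} (hg : StrictMono g) {a b : Fin m}
    (h : a ≤ b) : g a + ((b : ℕ) - (a : ℕ)) ≤ g b := by
  obtain ⟨k, hk⟩ := Nat.le.dest (show (a : ℕ) ≤ b from h)
  clear h
  induction k generalizing b with
  | zero => have : a = b := Fin.ext (by omega); subst this; omega
  | succ n ih =>
    have hb' : (a : ℕ) + n < m := by have := b.isLt; omega
    have hlt : (⟨(a : ℕ) + n, hb'⟩ : Fin m) < b := by
      rw [Fin.lt_iff_val_lt_val]; simp; omega
    have h1 := ih (b := ⟨(a : ℕ) + n, hb'⟩) (by simp)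
    have h2 := hg hlt
    simp at h1 ⊢
    omega

lemma strictMono_of_consec {m : ℕ} {α : Type*} [Preorder α] {g : Fin m → α}
    (h : ∀ k (hk : k + 1 < m), g ⟨k, Nat.lt_of_succ_lt hk⟩ < g ⟨k + 1, hk⟩) :
    StrictMono g := by
  have key : ∀ n : ℕ, ∀ a b : Fin m, (a : ℕ) + 1 + n = (b : ℕ) → g a < g b := by
    intro n
    induction n with
    | zero =>
      intro a b hab
      have hlt : (a : ℕ) + 1 < m := by have := b.isLt; omega
      have h1 := h (a : ℕ) hlt
      have e1 : (⟨(a : ℕ), Nat.lt_of_succ_lt hlt⟩ : Fin m) = a := Fin.ext rfl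
      have e2 : (⟨(a : ℕ) + 1, hlt⟩ : Fin m) = b := Fin.ext (show (a : ℕ) + 1 = (b : ℕ) by omega)
      rwa [e1, e2] at h1
    | succ n ih =>
      intro a b hab
      have hb' : (a : ℕ) + 1 + n < m := by have := b.isLt; omega
      have h1 := ih a ⟨(a : ℕ) + 1 + n, hb'⟩ rfl
      have hlt : ((a : ℕ) + 1 + n) + 1 < m := by have := b.isLt; omega
      have h2 := h ((a : ℕ) + 1 + n) hlt
      have e1 : (⟨(a : ℕ) + 1 + n, Nat.lt_of_succ_lt hlt⟩ : Fin m)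
          = ⟨(a : ℕ) + 1 + n, hb'⟩ := rfl
      have e2 : (⟨(a : ℕ) + 1 + n + 1, hlt⟩ : Fin m) = b := Fin.ext (show (a : ℕ) + 1 + n + 1 = (b : ℕ) by omega)
      rw [e1, e2] at h2
      exact h1.trans h2
  intro a b hab
  obtain ⟨k, hk⟩ := Nat.le.dest (show (a : ℕ) + 1 ≤ b from hab)
  exact key k a b hk

lemma cardInter_succ (D : Finset ℕ) (j : ℕ) :
    (D ∩ range (j + 1)).card = (D ∩ range j).card + (if j ∈ D then 1 else 0) := by
  rw [range_add_one, inter_comm, inter_comm D (range j)]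
  by_cases hj : j ∈ D
  · rw [insert_inter_of_mem hj, card_insert_of_notMem (by simp)]
    simp [hj]
  · rw [insert_inter_of_notMem hj]
    simp [hj]

lemma cardInter_le_left (D : Finset ℕ) (j : ℕ) : (D ∩ range j).card ≤ D.card :=
  card_le_card inter_subset_left

lemma cardInter_le_right (D : Finset ℕ) (j : ℕ) : (D ∩ range j).card ≤ j := by
  simpa using card_le_card (inter_subset_right (s₁ := D) (s₂ := range j))



lemma countA (D : Finset ℕ) (hD : D ⊆ range d) :
    (univ.filter (compat d t D)).card = (t + d - D.card).choose d := by
  classical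
  set s := D.card with hs
  have hsd : s ≤ d := by
    rw [hs]; simpa using card_le_card hD
  -- target set of the bijection
  rw [show (t + d - s).choose d = ((Icc 1 (t + d - s)).powersetCard d).card by
    rw [card_powersetCard, Nat.card_Icc]; norm_num]
  -- the M-sequence
  set Mseq : (Fin d → Fin (t + 1)) → ℕ → ℕ :=
    fun f m => Lam d t f m + (m - (D ∩ range m).card) with hMseq
  have hMstep : ∀ f, compat d t D f → ∀ m, m < d → Mseq f m < Mseq f (m + 1) := by
    intro f hf m hm
    obtain ⟨h1, h2⟩ := hf m hm
    have h3 := cardInter_succ D m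
    have h4 := cardInter_le_right D m
    simp only [hMseq]
    by_cases hmD : m ∈ D
    · have := h2 hmD; simp [hmD] at h3; omega
    · simp [hmD] at h3; omega
  have hMchain : ∀ f, compat d t D f → ∀ a b, a ≤ b → b ≤ d →
      Mseq f a + (b - a) ≤ Mseq f b := by
    intro f hf a b hab hbd
    obtain ⟨k, hk⟩ := Nat.le.dest hab
    subst hk
    induction k with
    | zero => show Mseq f a + (a + 0 - a) ≤ Mseq f a; omega
    | succ n ih =>
      have h1 := ih (by omega) (by omega)
      have h2 := hMstep f hf (a + n) (by omega)
      show Mseq f a + (a + (n + 1) - a) ≤ Mseq f (a + n + 1)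
      omega
  have hM0 : ∀ f, Mseq f 0 = 0 := by intro f; simp [hMseq, Lam_zero]
  have hMd : ∀ f, Mseq f d ≤ t + d - s := by
    intro f
    have h1 := Lam_le (d := d) (t := t) f d
    have h2 : D ∩ range d = D := inter_eq_left.mpr hD
    simp only [hMseq, h2, ← hs]
    omega
  -- bounds for the images
  have hMbound : ∀ f, compat d t D f → ∀ m, m ≤ d → m ≤ Mseq f m ∧ Mseq f m ≤ t + d - s - (d - m) := by
    intro f hf m hm
    have h1 := hMchain f hf 0 m (by omega) hm
    have h2 := hMchain f hf m d hm le_rfl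
    have h3 := hMd f
    have h4 := hM0 f
    omega
  -- forward map
  apply card_bij (i := fun f _ => image (fun j : Fin d => Mseq f ((j : ℕ) + 1)) univ)
  · -- membership
    intro f hf
    rw [mem_filter] at hf
    have hc := hf.2
    have hinj : StrictMono (fun j : Fin d => Mseq f ((j : ℕ) + 1)) := by
      apply strictMono_of_consec
      intro k hk
      exact hMstep f hc (k + 1) hk
    rw [mem_powersetCard]
    constructor
    · intro x hx
      rw [mem_image] at hx
      obtain ⟨j, _, rfl⟩ := hx
      have := hMbound f hc ((j : ℕ) + 1) j.isLt
      rw [mem_Icc]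
      have := j.isLt
      omega
    · rw [card_image_of_injective _ hinj.injective, card_univ, Fintype.card_fin]
  · -- injectivity
    intro f1 h1 f2 h2 heq
    rw [mem_filter] at h1 h2
    have hs1 : StrictMono (fun j : Fin d => Mseq f1 ((j : ℕ) + 1)) :=
      strictMono_of_consec fun k hk => hMstep f1 h1.2 (k + 1) hk
    have hs2 : StrictMono (fun j : Fin d => Mseq f2 ((j : ℕ) + 1)) :=
      strictMono_of_consec fun k hk => hMstep f2 h2.2 (k + 1) hk
    set S := image (fun j : Fin d => Mseq f1 ((j : ℕ) + 1)) univ with hS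
    have hcard : S.card = d := by
      rw [hS, card_image_of_injective _ hs1.injective, card_univ, Fintype.card_fin]
    have e1 : (fun j : Fin d => Mseq f1 ((j : ℕ) + 1)) = S.orderEmbOfFin hcard :=
      orderEmbOfFin_unique hcard (fun x => mem_image_of_mem _ (mem_univ x)) hs1
    have e2 : (fun j : Fin d => Mseq f2 ((j : ℕ) + 1)) = S.orderEmbOfFin hcard := by
      apply orderEmbOfFin_unique hcard _ hs2
      intro x
      rw [heq]
      exact mem_image_of_mem _ (mem_univ x)
    funext j
    have := congrFun (e1.trans e2.symm) j
    simp only [hMseq] at this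
    have hLam1 : Lam d t f1 ((j : ℕ) + 1) = (f1 j : ℕ) := by
      rw [Lam_succ f1 j.isLt]
    have hLam2 : Lam d t f2 ((j : ℕ) + 1) = (f2 j : ℕ) := by
      rw [Lam_succ f2 j.isLt]
    apply Fin.ext
    rw [← hLam1, ← hLam2]
    omega
  · -- surjectivity
    intro S hS
    rw [mem_powersetCard] at hS
    obtain ⟨hSsub, hScard⟩ := hS
    set g := S.orderEmbOfFin hScard with hg
    have hgs : StrictMono g := (S.orderEmbOfFin hScard).strictMono
    have hgmem : ∀ j : Fin d, 1 ≤ g j ∧ g j ≤ t + d - s := by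
      intro j
      have := hSsub (S.orderEmbOfFin_mem hScard j)
      rwa [mem_Icc] at this
    have hglow : ∀ j : Fin d, (j : ℕ) + 1 ≤ g j := by
      intro j
      have hd0 : 0 < d := j.pos
      have h1 := strictMono_fin_chain hgs (a := ⟨0, hd0⟩) (b := j) (Fin.mk_le_of_le_val (by omega))
      have h2 := (hgmem ⟨0, hd0⟩).1
      simp only [Fin.val_mk, Nat.sub_zero] at h1
      omega
    have hgupp : ∀ j : Fin d, g j + (d - 1 - (j : ℕ)) ≤ t + d - s := by
      intro j
      have hd0 : 0 < d := j.pos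
      have h1 := strictMono_fin_chain hgs (a := j) (b := ⟨d - 1, by omega⟩)
        (by rw [Fin.le_def]; simp; omega)
      have h2 := (hgmem ⟨d - 1, by omega⟩).2
      simp only [Fin.val_mk] at h1
      omega
    have hbound : ∀ j : Fin d,
        g j - ((j : ℕ) + 1 - (D ∩ range ((j : ℕ) + 1)).card) < t + 1 := by
      intro j
      have h1 := hgupp j
      have h2 := cardInter_le_left D ((j : ℕ) + 1)
      have h3 := cardInter_le_right D ((j : ℕ) + 1)
      have h4 := j.isLt
      omega
    set f : Fin d → Fin (t + 1) :=
      fun j => ⟨g j - ((j : ℕ) + 1 - (D ∩ range ((j : ℕ) + 1)).card), hbound j⟩ with hfdef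
    have hfval : ∀ m (hm : m < d),
        (f ⟨m, hm⟩ : ℕ) = g ⟨m, hm⟩ - (m + 1 - (D ∩ range (m + 1)).card) := fun m hm => rfl
    have hcompat : compat d t D f := by
      intro j hj
      match j with
      | 0 =>
        have hL1 : Lam d t f 1 = (f ⟨0, hj⟩ : ℕ) := Lam_succ f hj
        rw [hfval 0 hj] at hL1
        have hc1 := cardInter_succ D 0
        have hz : (D ∩ range 0).card = 0 := by simp
        have hg1 := (hgmem ⟨0, hj⟩).1
        rw [Lam_zero, hL1]
        by_cases h0 : 0 ∈ D <;> simp [h0] at hc1 ⊢ <;> omega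
      | (m + 1) =>
        have hm : m < d := by omega
        have hL1 : Lam d t f (m + 1) = (f ⟨m, hm⟩ : ℕ) := Lam_succ f hm
        have hL2 : Lam d t f (m + 2) = (f ⟨m + 1, hj⟩ : ℕ) := Lam_succ f hj
        rw [hfval m hm] at hL1
        rw [hfval (m + 1) hj] at hL2
        have hc2 := cardInter_succ D (m + 1)
        have hc3 := cardInter_le_right D (m + 1)
        have hlt : g ⟨m, hm⟩ < g ⟨m + 1, hj⟩ := hgs (by rw [Fin.mk_lt_mk]; omega)
        have hl1 := hglow ⟨m, hm⟩
        have hl2 := hglow ⟨m + 1, hj⟩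
        simp only [Fin.val_mk] at hl1 hl2
        rw [hL1, hL2]
        by_cases hmD : m + 1 ∈ D <;> simp [hmD] at hc2 ⊢ <;> omega
    refine ⟨f, mem_filter.mpr ⟨mem_univ f, hcompat⟩, ?_⟩
    have hMg : ∀ j : Fin d, Mseq f ((j : ℕ) + 1) = g j := by
      intro j
      have hL : Lam d t f ((j : ℕ) + 1) = (f j : ℕ) := by
        have := Lam_succ f j.isLt
        rwa [show (⟨(j : ℕ), j.isLt⟩ : Fin d) = j from Fin.ext rfl] at this
      have hfv : (f j : ℕ) = g j - ((j : ℕ) + 1 - (D ∩ range ((j : ℕ) + 1)).card) := rfl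
      have h2 := cardInter_le_right D ((j : ℕ) + 1)
      have h3 := hglow j
      simp only [hMseq, hL, hfv]
      omega
    have himg : image (fun j : Fin d => g j) univ = S := by
      apply Finset.coe_injective
      rw [coe_image, coe_univ, Set.image_univ]
      exact range_orderEmbOfFin S hScard
    rw [show (fun j : Fin d => Mseq f ((j : ℕ) + 1)) = fun j : Fin d => g j from funext hMg]
    exact himg

variable {d r t ℓ : ℕ}

lemma lval_pos_of_lcol_pos {x : Letter t r} (h : 0 < lcol x) : 0 < lval x := by
  cases x with
  | none => simp [lcol] at h
  | some a => simp [lval]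

lemma lval_pos_of_ne_none {x : Letter t r} (h : x ≠ none) : 0 < lval x := by
  cases x with
  | none => exact absurd rfl h
  | some a => simp [lval]

def fcol (hr : 0 < r) : Letter t r → Fin r
  | none => ⟨0, hr⟩
  | some (_, c) => c

lemma fcol_val (hr : 0 < r) (x : Letter t r) : (fcol hr x : ℕ) = lcol x := by
  cases x with
  | none => rfl
  | some a => rfl

def sortPerm (d r t : ℕ) (w : Fin d → Letter t r) : Equiv.Perm (Fin d) :=
  Tuple.sort (key d r t w)

lemma wv_zero (π : Equiv.Perm (Fin d)) : wreathVal d π 0 = 0 := by simp [wreathVal]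

lemma wv_succ (π : Equiv.Perm (Fin d)) {m : ℕ} (hm : m < d) :
    wreathVal d π (m + 1) = (π ⟨m, hm⟩ : ℕ) + 1 := by simp [wreathVal, hm]

lemma wc_zero (ε : Fin d → Fin r) : wreathCol d r ε 0 = 0 := by simp [wreathCol]

lemma wc_succ (ε : Fin d → Fin r) {m : ℕ} (hm : m < d) :
    wreathCol d r ε (m + 1) = (ε ⟨m, hm⟩ : ℕ) := by simp [wreathCol, hm]

def DL (d r ℓ : ℕ) (π : Equiv.Perm (Fin d)) (ε : Fin d → Fin r) : Finset ℕ :=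
  wreathDes d r π ε ∪
    (if 1 ≤ wreathVal d π 1 ∧ wreathVal d π 1 ≤ ℓ then {0} else ∅)

lemma wreathDesL_eq (π : Equiv.Perm (Fin d)) (ε : Fin d → Fin r) :
    wreathDesL d r ℓ π ε = (DL d r ℓ π ε).card := rfl

lemma DL_subset (hd : 0 < d) (π : Equiv.Perm (Fin d)) (ε : Fin d → Fin r) :
    DL d r ℓ π ε ⊆ range d := by
  apply union_subset (filter_subset _ _)
  split
  · intro x hx
    rw [mem_singleton] at hx
    subst hx
    exact mem_range.mpr hd
  · exact empty_subset _

lemma mem_DL_succ {m : ℕ} {π : Equiv.Perm (Fin d)} {ε : Fin d → Fin r} :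
    m + 1 ∈ DL d r ℓ π ε ↔ m + 1 ∈ wreathDes d r π ε := by
  rw [DL, mem_union]
  constructor
  · rintro (h | h)
    · exact h
    · exfalso
      revert h
      split <;> simp
  · exact Or.inl

lemma zeroBlock (hd : 0 < d) {π : Equiv.Perm (Fin d)} {ε : Fin d → Fin r}
    {f : Fin d → Fin (t + 1)} (hc : compat d t (DL d r ℓ π ε) f) :
    ∀ m (hm : m < d), (f ⟨m, hm⟩ : ℕ) = 0 →
      (ε ⟨m, hm⟩ : ℕ) = 0 ∧ (π ⟨0, hd⟩ : ℕ) ≤ (π ⟨m, hm⟩ : ℕ) ∧ (f ⟨0, hd⟩ : ℕ) = 0 := by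
  intro m
  induction m with
  | zero =>
    intro hm h0
    have hε : (ε ⟨0, hm⟩ : ℕ) = 0 := by
      by_contra hne
      have hdes : (0 : ℕ) ∈ wreathDes d r π ε := by
        rw [wreathDes, mem_filter]
        refine ⟨mem_range.mpr hd, Or.inl ?_⟩
        rw [wc_zero, show (0 : ℕ) + 1 = 0 + 1 from rfl, wc_succ ε hm]
        omega
      have := (hc 0 hd).2 (mem_union_left _ hdes)
      rw [Lam_zero, Lam_succ f hd] at this
      omega
    exact ⟨hε, le_refl _, h0⟩
  | succ m ih =>
    intro hm1 h0
    have hm : m < d := by omega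
    obtain ⟨hle, hstr⟩ := hc (m + 1) hm1
    rw [Lam_succ f hm, Lam_succ f hm1] at hle hstr
    have hfm : (f ⟨m, hm⟩ : ℕ) = 0 := by omega
    obtain ⟨hε, hπ, hf0⟩ := ih hm hfm
    have hε1 : (ε ⟨m + 1, hm1⟩ : ℕ) = 0 := by
      by_contra hne
      have hdes : m + 1 ∈ wreathDes d r π ε := by
        rw [wreathDes, mem_filter]
        refine ⟨mem_range.mpr hm1, Or.inl ?_⟩
        rw [wc_succ ε hm, wc_succ ε hm1]
        omega
      have := hstr (mem_union_left _ hdes)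
      omega
    have hπ1 : (π ⟨m, hm⟩ : ℕ) ≤ (π ⟨m + 1, hm1⟩ : ℕ) := by
      by_contra hne
      have hdes : m + 1 ∈ wreathDes d r π ε := by
        rw [wreathDes, mem_filter]
        refine ⟨mem_range.mpr hm1, Or.inr ⟨?_, ?_⟩⟩
        · rw [wc_succ ε hm, wc_succ ε hm1]; omega
        · rw [wv_succ π hm, wv_succ π hm1]; omega
      have := hstr (mem_union_left _ hdes)
      omega
    exact ⟨hε1, le_trans hπ (by omega), hf0⟩

lemma countB (hr : 0 < r) (hd : 0 < d) (π : Equiv.Perm (Fin d)) (ε : Fin d → Fin r) :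
    (univ.filter fun w : Fin d → Letter t r =>
        (∀ i : Fin d, (i : ℕ) < ℓ → w i ≠ none) ∧
          (sortPerm d r t w, fun j => fcol hr (w (sortPerm d r t w j))) = (π, ε)).card
      = (univ.filter (compat d t (DL d r ℓ π ε))).card := by
  classical
  apply card_bij (i := fun w _ =>
    fun j : Fin d => (⟨lval (w (π j)), Nat.lt_succ_of_le (lval_le _)⟩ : Fin (t + 1)))
  · -- membership : compat
    intro w hw
    rw [mem_filter, Prod.mk.injEq] at hw
    obtain ⟨-, hcon, hsort, hcolf⟩ := hw
    rw [hsort] at hcolf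
    have hcol : ∀ j : Fin d, (ε j : ℕ) = lcol (w (π j)) := by
      intro j
      rw [← congrFun hcolf j, fcol_val]
    have hsm : StrictMono (fun j : Fin d => key d r t w (π j)) := by
      have hmono : Monotone (key d r t w ∘ π) := by
        rw [← hsort]
        exact Tuple.monotone_sort _
      exact hmono.strictMono_of_injective ((key_inj w).comp π.injective)
    rw [mem_filter]
    refine ⟨mem_univ _, ?_⟩
    intro j hj
    match j with
    | 0 =>
      rw [Lam_zero, Lam_succ _ hj]
      refine ⟨Nat.zero_le _, ?_⟩
      intro hmem
      show 0 < lval (w (π ⟨0, hj⟩))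
      rcases mem_union.mp hmem with h | h
      · rw [wreathDes, mem_filter] at h
        rcases h.2 with h2 | h2
        · rw [wc_zero, show (0:ℕ) + 1 = 0 + 1 from rfl, wc_succ ε hj] at h2
          apply lval_pos_of_lcol_pos
          rw [← hcol ⟨0, hj⟩]
          omega
        · rw [wv_zero, show (0:ℕ) + 1 = 0 + 1 from rfl, wv_succ π hj] at h2
          omega
      · by_cases hcnd : 1 ≤ wreathVal d π 1 ∧ wreathVal d π 1 ≤ ℓ
        · apply lval_pos_of_ne_none
          apply hcon
          have := hcnd.2
          rw [show (1:ℕ) = 0 + 1 from rfl, wv_succ π hd] at this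
          have he : (⟨0, hd⟩ : Fin d) = ⟨0, hj⟩ := rfl
          rw [he] at this
          omega
        · rw [if_neg hcnd] at h
          exact absurd h (notMem_empty _)
    | (m + 1) =>
      have hm : m < d := by omega
      rw [Lam_succ _ hm, Lam_succ _ hj]
      have hk := hsm (show (⟨m, hm⟩ : Fin d) < ⟨m + 1, hj⟩ from by
        rw [Fin.mk_lt_mk]; omega)
      rw [key_lt_iff hr] at hk
      constructor
      · show lval (w (π ⟨m, hm⟩)) ≤ lval (w (π ⟨m + 1, hj⟩))
        omega
      · intro hmem
        show lval (w (π ⟨m, hm⟩)) < lval (w (π ⟨m + 1, hj⟩))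
        have hdes := mem_DL_succ.mp hmem
        rw [wreathDes, mem_filter] at hdes
        have h2 := hdes.2
        rw [wc_succ ε hm, wc_succ ε hj, wv_succ π hm, wv_succ π hj] at h2
        have hc1 := hcol ⟨m, hm⟩
        have hc2 := hcol ⟨m + 1, hj⟩
        omega
  · -- injectivity
    intro w1 h1 w2 h2 heq
    rw [mem_filter, Prod.mk.injEq] at h1 h2
    obtain ⟨-, -, hsort1, hcolf1⟩ := h1
    obtain ⟨-, -, hsort2, hcolf2⟩ := h2
    rw [hsort1] at hcolf1
    rw [hsort2] at hcolf2
    funext i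
    have hval := congrFun heq (π.symm i)
    rw [Fin.mk.injEq, Equiv.apply_symm_apply] at hval
    have hc1 : (ε (π.symm i) : ℕ) = lcol (w1 i) := by
      rw [← congrFun hcolf1 (π.symm i), fcol_val, Equiv.apply_symm_apply]
    have hc2 : (ε (π.symm i) : ℕ) = lcol (w2 i) := by
      rw [← congrFun hcolf2 (π.symm i), fcol_val, Equiv.apply_symm_apply]
    exact letter_ext hval (hc1 ▸ hc2)
  · -- surjectivity
    intro f hf
    rw [mem_filter] at hf
    have hc := hf.2
    set w : Fin d → Letter t r := fun i =>
      if h : 0 < (f (π.symm i) : ℕ) then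
        some (⟨(f (π.symm i) : ℕ) - 1, by have := (f (π.symm i)).isLt; omega⟩, ε (π.symm i))
      else none with hwdef
    have hlvalw : ∀ i, lval (w i) = (f (π.symm i) : ℕ) := by
      intro i
      simp only [hwdef]
      split
      · next h => simp [lval]; omega
      · next h => simp [lval]; omega
    have hzb : ∀ i : Fin d, (f (π.symm i) : ℕ) = 0 → (ε (π.symm i) : ℕ) = 0 := by
      intro i h0
      have := (zeroBlock hd hc (π.symm i) (π.symm i).isLt (by
        rwa [show (⟨((π.symm i) : ℕ), (π.symm i).isLt⟩ : Fin d) = π.symm i from Fin.ext rfl])).1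
      rwa [show (⟨((π.symm i) : ℕ), (π.symm i).isLt⟩ : Fin d) = π.symm i from Fin.ext rfl] at this
    have hlcolw : ∀ i, lcol (w i) = (ε (π.symm i) : ℕ) := by
      intro i
      simp only [hwdef]
      split
      · next h => simp [lcol]
      · next h => rw [hzb i (by omega)]; simp [lcol]
    have hcon : ∀ i : Fin d, (i : ℕ) < ℓ → w i ≠ none := by
      intro i hi hnone
      have h0 : (f (π.symm i) : ℕ) = 0 := by
        have := hlvalw i
        rw [hnone] at this
        simpa [lval] using this.symm
      obtain ⟨-, hπle, hf0⟩ := zeroBlock hd hc ((π.symm i) : ℕ) (π.symm i).isLt (by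
        rwa [show (⟨((π.symm i) : ℕ), (π.symm i).isLt⟩ : Fin d) = π.symm i from Fin.ext rfl])
      rw [show (⟨((π.symm i) : ℕ), (π.symm i).isLt⟩ : Fin d) = π.symm i from Fin.ext rfl,
        Equiv.apply_symm_apply] at hπle
      have h0DL : (0 : ℕ) ∈ DL d r ℓ π ε := by
        apply mem_union_right
        rw [if_pos ?_]
        · exact mem_singleton_self 0
        · rw [show (1:ℕ) = 0 + 1 from rfl, wv_succ π hd]
          omega
      have := (hc 0 hd).2 h0DL
      rw [Lam_zero, Lam_succ f hd] at this
      omega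
    have hsort : sortPerm d r t w = π := by
      have hsm : StrictMono (fun j : Fin d => key d r t w (π j)) := by
        apply strictMono_of_consec
        intro k hk
        have hkm : k < d := by omega
        obtain ⟨hle, hstr⟩ := hc (k + 1) hk
        rw [Lam_succ f hkm, Lam_succ f hk] at hle hstr
        rw [key_lt_iff hr]
        have hv1 : lval (w (π ⟨k, hkm⟩)) = (f ⟨k, hkm⟩ : ℕ) := by
          rw [hlvalw, Equiv.symm_apply_apply]
        have hv2 : lval (w (π ⟨k + 1, hk⟩)) = (f ⟨k + 1, hk⟩ : ℕ) := by
          rw [hlvalw, Equiv.symm_apply_apply]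
        have hc1 : lcol (w (π ⟨k, hkm⟩)) = (ε ⟨k, hkm⟩ : ℕ) := by
          rw [hlcolw, Equiv.symm_apply_apply]
        have hc2 : lcol (w (π ⟨k + 1, hk⟩)) = (ε ⟨k + 1, hk⟩ : ℕ) := by
          rw [hlcolw, Equiv.symm_apply_apply]
        rcases Nat.lt_or_ge (f ⟨k, hkm⟩ : ℕ) (f ⟨k + 1, hk⟩ : ℕ) with hlt | hge
        · left; omega
        · have heq : (f ⟨k, hkm⟩ : ℕ) = (f ⟨k + 1, hk⟩ : ℕ) := by omega
          have hnd : k + 1 ∉ wreathDes d r π ε := by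
            intro hmem
            have := hstr (mem_union_left _ hmem)
            omega
          rw [wreathDes, mem_filter] at hnd
          push_neg at hnd
          have hnd2 := hnd (mem_range.mpr hk)
          rw [wc_succ ε hkm, wc_succ ε hk, wv_succ π hkm, wv_succ π hk] at hnd2
          have hπne : (π ⟨k, hkm⟩ : ℕ) ≠ (π ⟨k + 1, hk⟩ : ℕ) := by
            intro hcontra
            have := π.injective (Fin.ext hcontra)
            rw [Fin.mk.injEq] at this
            omega
          right
          refine ⟨by omega, ?_⟩
          omega
      have hπeq : π = Tuple.sort (key d r t w) := by
        rw [Tuple.eq_sort_iff]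
        constructor
        · exact hsm.monotone
        · intro i j hij hkey
          exact absurd (π.injective (key_inj w hkey)) (Fin.ne_of_lt hij)
      exact hπeq.symm
    refine ⟨w, ?_, ?_⟩
    · rw [mem_filter, Prod.mk.injEq]
      refine ⟨mem_univ _, hcon, hsort, ?_⟩
      funext j
      apply Fin.ext
      rw [fcol_val, hsort, hlcolw, Equiv.symm_apply_apply]
    · funext j
      apply Fin.ext
      show lval (w (π j)) = (f j : ℕ)
      rw [hlvalw, Equiv.symm_apply_apply]

lemma card_filter_lt (hl : ℓ ≤ d) :
    (univ.filter fun i : Fin d => (i : ℕ) < ℓ).card = ℓ := by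
  rw [← Fintype.card_subtype]
  have e : {i : Fin d // (i : ℕ) < ℓ} ≃ Fin ℓ :=
    { toFun := fun x => ⟨(x.1 : ℕ), x.2⟩
      invFun := fun y => ⟨⟨(y : ℕ), lt_of_lt_of_le y.isLt hl⟩, y.isLt⟩
      left_inv := fun x => by ext; rfl
      right_inv := fun y => rfl }
  rw [Fintype.card_congr e, Fintype.card_fin]

lemma cardW (hr : 0 < r) (hl : ℓ ≤ d) (n : ℕ) :
    (univ.filter fun w : Fin d → Letter n r =>
        ∀ i : Fin d, (i : ℕ) < ℓ → w i ≠ none).card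
      = (r * n) ^ ℓ * (r * n + 1) ^ (d - ℓ) := by
  classical
  rw [← Fintype.card_subtype]
  rw [Fintype.card_congr (Equiv.subtypePiEquivPi
    (p := fun (i : Fin d) (x : Letter n r) => (i : ℕ) < ℓ → x ≠ none))]
  rw [Fintype.card_pi]
  have hfac : ∀ i : Fin d,
      Fintype.card {x : Letter n r // (i : ℕ) < ℓ → x ≠ none}
        = if (i : ℕ) < ℓ then r * n else r * n + 1 := by
    intro i
    by_cases hi : (i : ℕ) < ℓ
    · rw [if_pos hi]
      have e : {x : Letter n r // (i : ℕ) < ℓ → x ≠ none} ≃ {x : Letter n r // x.isSome} :=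
        Equiv.subtypeEquivRight (by
          intro x
          simp [hi, Option.isSome_iff_ne_none])
      rw [Fintype.card_congr (e.trans (Equiv.optionIsSomeEquiv _))]
      rw [Fintype.card_prod, Fintype.card_fin, Fintype.card_fin, mul_comm]
    · rw [if_neg hi]
      rw [Fintype.card_congr (Equiv.subtypeUnivEquiv (fun x h => absurd h hi))]
      rw [Fintype.card_option, Fintype.card_prod, Fintype.card_fin, Fintype.card_fin, mul_comm]
  rw [Finset.prod_congr rfl (fun i _ => hfac i)]
  rw [← Finset.prod_filter_mul_prod_filter_not univ (fun i : Fin d => (i : ℕ) < ℓ)]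
  rw [Finset.prod_congr rfl (fun i hi => if_pos (mem_filter.mp hi).2),
    Finset.prod_congr rfl (fun i (hi : i ∈ univ.filter _) => if_neg (mem_filter.mp hi).2)]
  rw [Finset.prod_const, Finset.prod_const, card_filter_lt hl]
  congr 2
  have h3 := card_filter_add_card_filter_not (s := (univ : Finset (Fin d)))
    (p := fun i : Fin d => (i : ℕ) < ℓ)
  rw [card_filter_lt hl, card_univ, Fintype.card_fin] at h3
  omega

lemma mainCount (hr : 0 < r) (hd : 0 < d) (hl : ℓ ≤ d) (n : ℕ) :
    (r * n) ^ ℓ * (r * n + 1) ^ (d - ℓ)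
      = ∑ π : Equiv.Perm (Fin d), ∑ ε : Fin d → Fin r,
          (n + d - wreathDesL d r ℓ π ε).choose d := by
  classical
  rw [← cardW hr hl n]
  rw [Finset.card_eq_sum_card_fiberwise (f := fun w : Fin d → Letter n r =>
      (sortPerm d r n w, fun j => fcol hr (w (sortPerm d r n w j))))
    (t := univ) (fun x _ => mem_univ _)]
  rw [Fintype.sum_prod_type]
  apply Finset.sum_congr rfl
  intro π _
  apply Finset.sum_congr rfl
  intro ε _
  rw [filter_filter]
  rw [countB hr hd π ε, countA (DL d r ℓ π ε) (DL_subset hd π ε), wreathDesL_eq]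

end CEAux

/-- Proposition 5.6: for `d, r ≥ 1` and `0 ≤ ℓ ≤ d`, the identity of formal power series
`(1-x)^{d+1} ∑_{t ≥ 0} (rt)^ℓ (rt+1)^{d-ℓ} x^t = ∑_{(π,ε) ∈ ℤ_r ≀ S_d} x^{des_ℓ(π,ε)}`
holds, i.e. the `r`-colored `ℓ`-Eulerian polynomial `A_{d,ℓ}^{(r)}` is the generating
polynomial of the `ℓ`-descent statistic over the wreath product `ℤ_r ≀ S_d`. -/
theorem colored_eulerian_eq_wreath_descent_gen (d r ℓ : ℕ) (hd : 1 ≤ d) (hr : 1 ≤ r)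
    (hℓ : ℓ ≤ d) :
    ((1 - PowerSeries.X : PowerSeries ℝ) ^ (d + 1) *
        PowerSeries.mk fun t : ℕ => ((r : ℝ) * t) ^ ℓ * ((r : ℝ) * t + 1) ^ (d - ℓ)) =
      ∑ π : Equiv.Perm (Fin d), ∑ ε : Fin d → Fin r,
        (PowerSeries.X : PowerSeries ℝ) ^ wreathDesL d r ℓ π ε := by
  classical
  have hkey : (PowerSeries.mk fun t : ℕ => ((r : ℝ) * t) ^ ℓ * ((r : ℝ) * t + 1) ^ (d - ℓ))
      = (∑ π : Equiv.Perm (Fin d), ∑ ε : Fin d → Fin r,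
          (PowerSeries.X : PowerSeries ℝ) ^ wreathDesL d r ℓ π ε)
        * (PowerSeries.invOneSubPow ℝ (d + 1)).val := by
    rw [PowerSeries.invOneSubPow_val_succ_eq_mk_add_choose]
    ext n
    rw [PowerSeries.coeff_mk, Finset.sum_mul]
    rw [map_sum]
    have hterm : ∀ π : Equiv.Perm (Fin d),
        (PowerSeries.coeff n)
            ((∑ ε : Fin d → Fin r,
              (PowerSeries.X : PowerSeries ℝ) ^ wreathDesL d r ℓ π ε) *
                PowerSeries.mk fun m => ((d + m).choose d : ℝ))
          = ∑ ε : Fin d → Fin r,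
              (((n + d - wreathDesL d r ℓ π ε).choose d : ℕ) : ℝ) := by
      intro π
      rw [Finset.sum_mul, map_sum]
      apply Finset.sum_congr rfl
      intro ε _
      rw [PowerSeries.coeff_X_pow_mul', PowerSeries.coeff_mk]
      have hDLle : wreathDesL d r ℓ π ε ≤ d := by
        rw [CEAux.wreathDesL_eq]
        calc (CEAux.DL d r ℓ π ε).card ≤ (Finset.range d).card :=
              Finset.card_le_card (CEAux.DL_subset hd π ε)
          _ = d := Finset.card_range d
      by_cases h : wreathDesL d r ℓ π ε ≤ n
      · rw [if_pos h]
        congr 2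
        omega
      · rw [if_neg h]
        rw [Nat.choose_eq_zero_of_lt (by omega)]
        simp
    rw [Finset.sum_congr rfl fun π _ => hterm π]
    have hmc := CEAux.mainCount (ℓ := ℓ) hr hd hℓ n
    have : (((r * n) ^ ℓ * (r * n + 1) ^ (d - ℓ) : ℕ) : ℝ)
        = ((∑ π : Equiv.Perm (Fin d), ∑ ε : Fin d → Fin r,
            (n + d - wreathDesL d r ℓ π ε).choose d : ℕ) : ℝ) := by
      exact congrArg (fun k : ℕ => (k : ℝ)) hmc
    push_cast at this ⊢
    convert this using 2
  rw [hkey, ← mul_assoc, mul_comm ((1 - PowerSeries.X : PowerSeries ℝ) ^ (d + 1)), mul_assoc]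
  rw [← PowerSeries.invOneSubPow_inv_eq_one_sub_pow]
  rw [(PowerSeries.invOneSubPow ℝ (d + 1)).inv_val, mul_one]
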